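/- Let (X,d,μ) satisfy BG(K,N) (Bishop–Gromov volume comparison with model volumes V_{K,N}), with X containing at least two points, and suppose balls have positive finite measure. Then for every x ∈ X and R₀ > 0 there exists C > 0 such that μ(B(x,r)) ≤ C·r for all 0 < r < R₀. Moreover C can be chosen uniformly for x' in a neighborhood of x. -/

import Mathlib

open MeasureTheory Metric

theorem bishop_gromov_linear_volume_bound
    {X : Type*} [MetricSpace X] [MeasurableSpace X] [BorelSpace X] [Nontrivial X]
    (μ : Measure X) (V : ℝ → ℝ)
    (hVpos : ∀ r : ℝ, 0 < r → 0 < V r)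
    (hVmono : ∀ r s : ℝ, 0 < r → r ≤ s → V r ≤ V s)
    (hVlip : ∀ r : ℝ, 0 < r → ∃ ε₀ > 0, ∃ L : ℝ,
      ∀ a ∈ Set.Ioo (r - ε₀) (r + ε₀), ∀ b ∈ Set.Ioo (r - ε₀) (r + ε₀),
        |V a - V b| ≤ L * |a - b|)
    (hpos : ∀ (x : X) (r : ℝ), 0 < r → 0 < μ (ball x r))
    (hfin : ∀ (x : X) (r : ℝ), 0 < r → μ (ball x r) ≠ ⊤)
    (hBG : ∀ (x : X) (r R : ℝ), 0 < r → r < R →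
      (μ (ball x R)).toReal / (μ (ball x r)).toReal ≤ V R / V r) :
    ∀ (x : X) (R₀ : ℝ), 0 < R₀ →
      ∃ C > 0, ∃ δ > 0, ∀ x' : X, dist x x' < δ →
        ∀ r : ℝ, 0 < r → r < R₀ → (μ (ball x' r)).toReal ≤ C * r := by
  intro x R₀ hR₀
  obtain ⟨y, hy⟩ := exists_ne x
  set ρ : ℝ := dist x y with hρdef
  have hρ : 0 < ρ := dist_pos.mpr (Ne.symm hy)
  obtain ⟨ε₀, hε₀, L, hL⟩ := hVlip ρ hρ
  set L' : ℝ := |L| + 1 with hL'def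
  have hL'pos : 0 < L' := by positivity
  have hL2 : ∀ a ∈ Set.Ioo (ρ - ε₀) (ρ + ε₀), ∀ b ∈ Set.Ioo (ρ - ε₀) (ρ + ε₀),
      |V a - V b| ≤ L' * |a - b| := by
    intro a ha b hb
    refine (hL a ha b hb).trans ?_
    have : L ≤ L' := by
      have := le_abs_self L; simp only [hL'def]; linarith
    exact mul_le_mul_of_nonneg_right this (abs_nonneg _)
  set δ : ℝ := min (ρ / 8) (ε₀ / 4) with hδdef
  have hδpos : 0 < δ := lt_min (by linarith) (by linarith)
  have hδρ : δ ≤ ρ / 8 := min_le_left _ _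
  have hδε : δ ≤ ε₀ / 4 := min_le_right _ _
  set Rbig : ℝ := 4 * ρ + R₀ + 1 with hRbigdef
  have hRbigpos : 0 < Rbig := by positivity
  set M : ℝ := (μ (ball x Rbig)).toReal with hMdef
  have hMpos : 0 < M :=
    ENNReal.toReal_pos (hpos x Rbig hRbigpos).ne' (hfin x Rbig hRbigpos)
  have hVhalf : 0 < V (ρ / 2) := hVpos _ (by linarith)
  set C : ℝ := 2 * L' * M / V (ρ / 2) + M / δ + 1 with hCdef
  have hC1nn : 0 ≤ 2 * L' * M / V (ρ / 2) := by positivity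
  have hC2nn : 0 ≤ M / δ := by positivity
  refine ⟨C, by positivity, δ, hδpos, ?_⟩
  intro x' hx' r hr hrR₀
  -- Balls around x' of radius < R₀ are contained in the big ball around x
  have hsubbig : ball x' r ⊆ ball x Rbig := by
    apply ball_subset_ball'
    have := dist_comm x x' ▸ hx'
    have : r + dist x' x < Rbig := by
      rw [dist_comm]
      have hb : R₀ + δ ≤ Rbig := by simp only [hRbigdef]; linarith
      linarith
    linarith
  have hμbig : (μ (ball x' r)).toReal ≤ M := by
    apply ENNReal.toReal_mono (hfin x Rbig hRbigpos) (measure_mono hsubbig)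
  rcases le_or_gt δ r with hcase | hcase
  · -- large radius case
    have : M ≤ M / δ * r := by
      rw [div_mul_eq_mul_div, le_div_iff₀ hδpos]
      exact mul_le_mul_of_nonneg_left hcase hMpos.le
    calc (μ (ball x' r)).toReal ≤ M := hμbig
      _ ≤ M / δ * r := this
      _ ≤ C * r := by
        apply mul_le_mul_of_nonneg_right _ hr.le
        simp only [hCdef]; linarith
  · -- small radius case: annulus argument
    set ρ' : ℝ := dist x' y with hρ'def
    have hρ'close : |ρ' - ρ| ≤ dist x x' := by
      rw [hρ'def, hρdef, dist_comm x x']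
      exact abs_dist_sub_le x' x y
    have hρ'lo : ρ - δ < ρ' := by
      have := abs_le.mp hρ'close; linarith [this.1]
    have hρ'hi : ρ' < ρ + δ := by
      have := abs_le.mp hρ'close; linarith [this.2]
    set r' : ℝ := ρ' - r with hr'def
    set R' : ℝ := ρ' + r with hR'def
    have hr'pos : 0 < r' := by simp only [hr'def]; linarith
    have hr'half : ρ / 2 ≤ r' := by simp only [hr'def]; linarith
    have hr'R' : r' < R' := by simp only [hr'def, hR'def]; linarith
    have hR'pos : 0 < R' := lt_trans hr'pos hr'R'
    have hr'Ioo : r' ∈ Set.Ioo (ρ - ε₀) (ρ + ε₀) := by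
      constructor <;> simp only [hr'def] <;> linarith
    have hR'Ioo : R' ∈ Set.Ioo (ρ - ε₀) (ρ + ε₀) := by
      constructor <;> simp only [hR'def] <;> linarith
    -- disjointness and inclusion
    have hdisj : Disjoint (ball x' r) (ball y r') := by
      rw [Set.disjoint_left]
      intro z hz1 hz2
      rw [mem_ball] at hz1 hz2
      have : ρ' ≤ dist z x' + dist z y := by
        rw [hρ'def]
        calc dist x' y ≤ dist x' z + dist z y := dist_triangle _ _ _
          _ = dist z x' + dist z y := by rw [dist_comm x' z]
      simp only [hr'def] at hz2
      linarith
    have hsub1 : ball x' r ⊆ ball y R' := by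
      intro z hz
      rw [mem_ball] at hz ⊢
      calc dist z y ≤ dist z x' + dist x' y := dist_triangle _ _ _
        _ < r + ρ' := by linarith
        _ = R' := by simp only [hR'def]; ring
    have hsub2 : ball y r' ⊆ ball y R' := ball_subset_ball hr'R'.le
    have hunion : μ (ball x' r) + μ (ball y r') ≤ μ (ball y R') := by
      rw [← measure_union hdisj measurableSet_ball]
      exact measure_mono (Set.union_subset hsub1 hsub2)
    have hfinR' := hfin y R' hR'pos
    have hfinr' := hfin y r' hr'pos
    have hfinx' : μ (ball x' r) ≠ ⊤ := hfin x' r hr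
    have hreal : (μ (ball x' r)).toReal + (μ (ball y r')).toReal
        ≤ (μ (ball y R')).toReal := by
      rw [← ENNReal.toReal_add hfinx' hfinr']
      exact ENNReal.toReal_mono hfinR' hunion
    -- Bishop-Gromov
    have hμr'pos : 0 < (μ (ball y r')).toReal :=
      ENNReal.toReal_pos (hpos y r' hr'pos).ne' hfinr'
    have hBG' := hBG y r' R' hr'pos hr'R'
    have hVr'pos : 0 < V r' := hVpos _ hr'pos
    have hμR'le : (μ (ball y R')).toReal ≤ V R' / V r' * (μ (ball y r')).toReal :=
      (div_le_iff₀ hμr'pos).mp hBG'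
    -- Lipschitz bound
    have hVdiff : V R' - V r' ≤ L' * (2 * r) := by
      have := hL2 R' hR'Ioo r' hr'Ioo
      have habs : |R' - r'| = 2 * r := by
        rw [abs_of_nonneg (by linarith)]; simp only [hR'def, hr'def]; ring
      rw [habs] at this
      calc V R' - V r' ≤ |V R' - V r'| := le_abs_self _
        _ ≤ L' * (2 * r) := this
    have hVr'ge : V (ρ / 2) ≤ V r' := hVmono _ _ (by linarith) hr'half
    have hμr'M : (μ (ball y r')).toReal ≤ M := by
      apply ENNReal.toReal_mono (hfin x Rbig hRbigpos)
      apply measure_mono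
      apply ball_subset_ball'
      rw [dist_comm y x, hρdef.symm]
      simp only [hr'def, hRbigdef]
      linarith
    -- put it all together
    have key : (μ (ball x' r)).toReal
        ≤ (V R' - V r') / V r' * (μ (ball y r')).toReal := by
      have : (μ (ball x' r)).toReal
          ≤ (V R' / V r') * (μ (ball y r')).toReal - (μ (ball y r')).toReal := by
        linarith
      calc (μ (ball x' r)).toReal
          ≤ (V R' / V r') * (μ (ball y r')).toReal - (μ (ball y r')).toReal := this
        _ = (V R' - V r') / V r' * (μ (ball y r')).toReal := by
            field_simp
    have hfrac : (V R' - V r') / V r' ≤ L' * (2 * r) / V (ρ / 2) := by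
      apply div_le_div₀ (by positivity) hVdiff hVhalf hVr'ge
    have hVdiffnn : 0 ≤ (V R' - V r') / V r' := by
      apply div_nonneg _ hVr'pos.le
      have : V r' ≤ V R' := hVmono _ _ hr'pos hr'R'.le
      linarith
    calc (μ (ball x' r)).toReal
        ≤ (V R' - V r') / V r' * (μ (ball y r')).toReal := key
      _ ≤ (L' * (2 * r) / V (ρ / 2)) * M := by
          apply mul_le_mul hfrac hμr'M hμr'pos.le (by positivity)
      _ = (2 * L' * M / V (ρ / 2)) * r := by ring
      _ ≤ C * r := by
          apply mul_le_mul_of_nonneg_right _ hr.le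
          simp only [hCdef]; linarith
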